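/- Let σ be the permutation produced by the Deodhar maximal lift procedure with inputs p ≤ n, a p-element subset Y of [n], and w ∈ S_n with Y ≤ {w_1,...,w_p}. Then for i ≠ p with w_i > w_{i+1}, we have σ_i > σ_{i+1}. In other words, Des(w) \ {p} ⊆ Des(σ), where Des(η) = {1 ≤ i ≤ n-1 : η_i > η_{i+1}}. -/

import Mathlib

/-- Dominance order on equal-cardinality finite sets of naturals:
the i-th smallest element of `E` is at most the i-th smallest element of `F`. -/
def Dom (E F : Finset ℕ) : Prop :=
  List.Forall₂ (· ≤ ·) (Finset.sort E (· ≤ ·)) (Finset.sort F (· ≤ ·))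

/-- The k-th smallest element of `E` (1-based), with junk value 0 out of range. -/
def nth (E : Finset ℕ) (k : ℕ) : ℕ := (Finset.sort E (· ≤ ·)).getD (k - 1) 0

/-- The (0-based) level of `e` in `E`: its index in the increasing enumeration. -/
def level (e : ℕ) (E : Finset ℕ) : ℕ := List.idxOf e (Finset.sort E (· ≤ ·))

/-- The Bruhat order, via the tableau criterion, on permutations of `[n] = {1,...,n}`
given in one-line notation as functions `ℕ → ℕ`. -/
def Bruhat (n : ℕ) (v w : ℕ → ℕ) : Prop :=
  ∀ i ≤ n, Dom ((Finset.Icc 1 i).image v) ((Finset.Icc 1 i).image w)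

lemma sort_insert_eq (E : Finset ℕ) (x : ℕ) (hx : x ∉ E) :
    Finset.sort (insert x E) (· ≤ ·) =
      List.orderedInsert (· ≤ ·) x (Finset.sort E (· ≤ ·)) := by
  haveI : IsAntisymm ℕ (· ≤ ·) := ⟨fun _ _ => le_antisymm⟩
  refine (fun hp h1 h2 => List.Perm.eq_of_pairwise' (r := (· ≤ ·)) h1 h2 hp) ?_ ?_ ?_
  · have h1 : (Finset.sort (insert x E) (fun x1 x2 => x1 ≤ x2) : Multiset ℕ) = (insert x E).val :=
      Finset.sort_eq _ _
    have h2 : (insert x E).val = x ::ₘ E.val := Finset.insert_val_of_notMem hx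
    have h3 : (x ::ₘ E.val) = ((x :: Finset.sort E (· ≤ ·) : List ℕ) : Multiset ℕ) := by
      rw [← Multiset.cons_coe, Finset.sort_eq]
    have : (Finset.sort (insert x E) (· ≤ ·) : Multiset ℕ)
        = ((x :: Finset.sort E (· ≤ ·) : List ℕ) : Multiset ℕ) := by rw [h1, h2, h3]
    have hperm := Multiset.coe_eq_coe.1 this
    exact hperm.trans (List.perm_orderedInsert _ _ _).symm
  · exact Finset.pairwise_sort _ _
  · exact (Finset.pairwise_sort E _).orderedInsert x _

lemma nth_insert (E : Finset ℕ) {x : ℕ} (hx : x ∉ E) :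
    ∃ t, 1 ≤ t ∧ t ≤ E.card + 1 ∧
      nth (insert x E) t = x ∧
      (∀ r, 1 ≤ r → r < t → nth (insert x E) r = nth E r) ∧
      (∀ r, t < r → nth (insert x E) r = nth E (r - 1)) ∧
      (∀ r, 1 ≤ r → r < t → nth E r < x) ∧
      (t ≤ E.card → x < nth E t) := by
  classical
  set l := Finset.sort E (· ≤ ·) with hl
  set tw := l.takeWhile (fun b => ¬ x ≤ b) with htw
  set dw := l.dropWhile (fun b => ¬ x ≤ b) with hdw
  have hsplit : tw ++ dw = l := List.takeWhile_append_dropWhile ..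
  have hlen : l.length = E.card := Finset.length_sort _
  have hins : Finset.sort (insert x E) (· ≤ ·) = tw ++ x :: dw := by
    rw [sort_insert_eq E x hx, List.orderedInsert_eq_take_drop]
  have htwlen : tw.length ≤ E.card := by
    have := List.length_append (as := tw) (bs := dw)
    rw [hsplit] at this
    omega
  refine ⟨tw.length + 1, by omega, by omega, ?_, ?_, ?_, ?_, ?_⟩
  · show (Finset.sort (insert x E) (· ≤ ·)).getD (tw.length + 1 - 1) 0 = x
    rw [hins, Nat.add_sub_cancel, List.getD_append_right _ _ _ _ le_rfl, Nat.sub_self]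
    rfl
  · intro r h1 h2
    have hr : r - 1 < tw.length := by omega
    show (Finset.sort (insert x E) (· ≤ ·)).getD (r-1) 0 = l.getD (r-1) 0
    rw [hins, List.getD_append _ _ _ _ hr, ← hsplit, List.getD_append _ _ _ _ hr]
  · intro r h2
    show (Finset.sort (insert x E) (· ≤ ·)).getD (r-1) 0 = l.getD (r-1-1) 0
    rw [hins, List.getD_append_right _ _ _ _ (by omega), ← hsplit]
    have h3 : r - 1 - tw.length = (r - 2 - tw.length) + 1 := by omega
    have h4 : r - 1 - 1 = r - 2 := by omega
    rw [h3, List.getD_cons_succ, h4, List.getD_append_right _ _ _ _ (by omega)]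
  · intro r h1 h2
    have hr : r - 1 < tw.length := by omega
    have : nth E r = tw.getD (r-1) 0 := by
      show l.getD (r-1) 0 = _
      rw [← hsplit, List.getD_append _ _ _ _ hr]
    have hmem : nth E r ∈ tw := by
      rw [this, List.getD_eq_getElem _ _ hr]
      exact List.getElem_mem _
    have := List.mem_takeWhile_imp hmem
    simp only [decide_not, Bool.not_eq_true', decide_eq_false_iff_not, not_le] at this
    exact of_decide_eq_true this
  · intro ht
    have hdwne : dw ≠ [] := by
      intro h
      have := congrArg List.length hsplit
      rw [h] at this
      simp at this
      omega
    have hpos : 0 < dw.length := List.length_pos_iff.2 hdwne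
    have hhead : nth E (tw.length + 1) = dw.head hdwne := by
      show l.getD (tw.length + 1 - 1) 0 = _
      rw [Nat.add_sub_cancel, ← hsplit, List.getD_append_right _ _ _ _ le_rfl, Nat.sub_self,
        List.getD_eq_getElem _ _ hpos]
      exact List.getElem_zero hpos ▸ rfl
    have hfail' := List.head_dropWhile_not (fun b => decide ¬ x ≤ b) (l := l) hdwne
    have hfail : x ≤ dw.head hdwne := by
      have h5 : ¬ ¬ (x ≤ dw.head hdwne) := by
        simpa only [decide_eq_false_iff_not] using hfail'
      exact not_not.1 h5
    have hmem : dw.head hdwne ∈ E := by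
      have : dw.head hdwne ∈ l := (List.dropWhile_sublist _).subset (List.head_mem hdwne)
      exact (Finset.mem_sort _).1 this
    have hne : x ≠ dw.head hdwne := fun h => hx (h ▸ hmem)
    rw [hhead]
    exact lt_of_le_of_ne hfail hne

lemma nth_mem (E : Finset ℕ) {k : ℕ} (h1 : 1 ≤ k) (h2 : k ≤ E.card) : nth E k ∈ E := by
  have hlt : k - 1 < (Finset.sort E (· ≤ ·)).length := by
    rw [Finset.length_sort]; omega
  rw [nth, List.getD_eq_getElem _ _ hlt]
  exact (Finset.mem_sort _).1 (List.getElem_mem _)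

lemma nth_lt_nth (E : Finset ℕ) {k k' : ℕ} (h1 : 1 ≤ k) (h2 : k < k') (h3 : k' ≤ E.card) :
    nth E k < nth E k' := by
  have hl : (Finset.sort E (· ≤ ·)).length = E.card := Finset.length_sort _
  have hlt : k - 1 < (Finset.sort E (· ≤ ·)).length := by omega
  have hlt' : k' - 1 < (Finset.sort E (· ≤ ·)).length := by omega
  rw [nth, nth, List.getD_eq_getElem _ _ hlt, List.getD_eq_getElem _ _ hlt']
  exact Finset.sortedLT_sort E (show (⟨k-1, hlt⟩ : Fin _) < ⟨k'-1, hlt'⟩ from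
    (by simp; omega))

lemma nth_le_nth (E : Finset ℕ) {k k' : ℕ} (h1 : 1 ≤ k) (h2 : k ≤ k') (h3 : k' ≤ E.card) :
    nth E k ≤ nth E k' := by
  rcases eq_or_lt_of_le h2 with rfl | h
  · exact le_rfl
  · exact le_of_lt (nth_lt_nth E h1 h h3)

lemma exists_nth_eq (E : Finset ℕ) {x : ℕ} (hx : x ∈ E) :
    ∃ k, 1 ≤ k ∧ k ≤ E.card ∧ nth E k = x := by
  have : x ∈ Finset.sort E (· ≤ ·) := (Finset.mem_sort _).2 hx
  obtain ⟨i, hi, hix⟩ := List.getElem_of_mem this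
  refine ⟨i + 1, by omega, by rw [← Finset.length_sort (· ≤ ·)]; omega, ?_⟩
  rw [nth, Nat.add_sub_cancel, List.getD_eq_getElem _ _ hi, hix]

lemma nth_le_insert_succ (E : Finset ℕ) {x : ℕ} (hx : x ∉ E) {r : ℕ}
    (h1 : 1 ≤ r) (h2 : r ≤ E.card) : nth E r ≤ nth (insert x E) (r + 1) := by
  obtain ⟨t, ht1, ht2, htx, htl, htr, htlo, hthi⟩ := nth_insert E hx
  rcases lt_trichotomy (r + 1) t with h | h | h
  · rw [htl (r+1) (by omega) h]
    exact nth_le_nth E h1 (by omega) (by omega)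
  · rw [← h] at htx
    rw [htx]
    exact le_of_lt (htlo r h1 (by omega))
  · rw [htr (r+1) h, Nat.add_sub_cancel]

lemma step_lemma (m : ℕ) (Bs As : Finset ℕ) (γ α q : ℕ)
    (hBc : Bs.card = m) (hAc : As.card = m) (hγ : γ ∉ As)
    (hinv : ∀ k, 1 ≤ k → k ≤ m → nth Bs k ≤ nth As k)
    (hq1 : 1 ≤ q) (hq2 : q ≤ m + 1)
    (hqv : q ≤ m → nth (insert γ As) q < nth Bs q)
    (hqmin : ∀ r, 1 ≤ r → r < q → nth Bs r ≤ nth (insert γ As) r)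
    (hα : α = nth (insert γ As) q) :
    α ∉ Bs ∧
    (∀ k, 1 ≤ k → k ≤ m + 1 → nth (insert α Bs) k ≤ nth (insert γ As) k) ∧
    (∀ r, 1 ≤ r → r < q → nth (insert α Bs) r = nth Bs r) ∧
    nth (insert α Bs) q = α ∧
    (∀ r, q < r → nth (insert α Bs) r = nth Bs (r - 1)) ∧
    (∃ s, 1 ≤ s ∧ s ≤ q ∧ nth (insert γ As) s = γ) := by
  have hcardA' : (insert γ As).card = m + 1 := by
    rw [Finset.card_insert_of_notMem hγ, hAc]
  obtain ⟨s, hs1, hs2, hsγ, hsl, hsr, hslo, hshi⟩ := nth_insert As hγ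
  rw [hAc] at hs2 hshi
  have hsq : s ≤ q := by
    by_contra h
    push_neg at h
    have hqm : q ≤ m := by omega
    have e1 : nth (insert γ As) q = nth As q := hsl q hq1 h
    have e2 := hqv hqm
    have e3 := hinv q hq1 hqm
    omega
  have hkey : ∀ r, 1 ≤ r → r < q → nth Bs r < α := by
    intro r h1 h2
    have e1 := hqmin r h1 h2
    have e2 : nth (insert γ As) r < nth (insert γ As) q :=
      nth_lt_nth _ h1 h2 (by omega)
    omega
  have hαB : α ∉ Bs := by
    intro hmem
    obtain ⟨k, hk1, hk2, hk⟩ := exists_nth_eq Bs hmem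
    rw [hBc] at hk2
    rcases lt_or_ge k q with h | h
    · have := hkey k hk1 h
      omega
    · have e1 := hqv (by omega)
      have e2 := nth_le_nth Bs hq1 h (by omega)
      omega
  obtain ⟨t, ht1, ht2, htα, htl, htr, htlo, hthi⟩ := nth_insert Bs hαB
  rw [hBc] at ht2 hthi
  have htq : t = q := by
    rcases lt_trichotomy t q with h | h | h
    · have e1 := hthi (by omega)
      have e2 := hkey t ht1 h
      omega
    · exact h
    · have e1 := htlo q hq1 h
      have e2 := hqv (by omega)
      omega
  rw [htq] at htα htl htr htlo hthi
  refine ⟨hαB, ?_, htl, htα, htr, ⟨s, hs1, hsq, hsγ⟩⟩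
  intro k hk1 hk2
  rcases lt_trichotomy k q with h | h | h
  · rw [htl k hk1 h]
    exact hqmin k hk1 h
  · subst h
    rw [htα, hα]
  · rw [htr k h]
    have h1' : 1 ≤ k - 1 := by omega
    have h2' : k - 1 ≤ m := by omega
    have e1 := hinv (k-1) h1' h2'
    have e2 := nth_le_insert_succ As hγ h1' (by omega)
    have e3 : k - 1 + 1 = k := by omega
    rw [e3] at e2
    omega

lemma Icc_one_succ (j : ℕ) : Finset.Icc 1 (j+1) = insert (j+1) (Finset.Icc 1 j) := by
  ext a
  simp only [Finset.mem_Icc, Finset.mem_insert]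
  omega

theorem stmt14 (n p : ℕ) (hp : p ≤ n) (w σ : ℕ → ℕ)
    (hw : Set.BijOn w (Set.Icc 1 n) (Set.Icc 1 n))
    (Y : Finset ℕ) (hYs : Y ⊆ Finset.Icc 1 n) (hYc : Y.card = p)
    -- Y ≤ {w_1,...,w_p}:
    (hdom : Dom Y ((Finset.Icc 1 p).image w))
    -- for j ≤ p, σ_j is the maximum element of Y \ {σ_1,...,σ_{j-1}} not exceeding w_j:
    (hσ1 : ∀ j, 1 ≤ j → j ≤ p →
      ((Y \ ((Finset.Icc 1 (j - 1)).image σ)).filter (fun y => y ≤ w j)).max = (σ j : WithBot ℕ))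
    -- for j > p, σ_j is the output of the subroutine with A = {w_1,...,w_{j-1}},
    -- B = {σ_1,...,σ_{j-1}}, γ = w_j (so that A ∪ {γ} = {w_1,...,w_j}):
    -- q is least in {1,...,j} with b̃_q > ã'_q (with b̃_j = ∞), and σ_j = ã'_q:
    (hσ2 : ∀ j, p < j → j ≤ n → ∃ q, 1 ≤ q ∧ q ≤ j ∧
      (q ≤ j - 1 →
        nth ((Finset.Icc 1 (j - 1)).image σ) q > nth ((Finset.Icc 1 j).image w) q) ∧
      (∀ r, 1 ≤ r → r < q →
        nth ((Finset.Icc 1 (j - 1)).image σ) r ≤ nth ((Finset.Icc 1 j).image w) r) ∧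
      σ j = nth ((Finset.Icc 1 j).image w) q) :
    ∀ i, 1 ≤ i → i + 1 ≤ n → i ≠ p → w i > w (i + 1) → σ i > σ (i + 1) := by
  classical
  have hdom : List.Forall₂ (· ≤ ·) (Finset.sort Y (· ≤ ·))
      (Finset.sort ((Finset.Icc 1 p).image w) (· ≤ ·)) := hdom
  intro i hi1 hin hip hgt
  have hwinj : Set.InjOn w (Set.Icc 1 n) := hw.injOn
  have hsub : ∀ j, j ≤ n → (↑(Finset.Icc 1 j) : Set ℕ) ⊆ Set.Icc 1 n := by
    intro j hj
    rw [Finset.coe_Icc]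
    exact Set.Icc_subset_Icc_right (by exact_mod_cast hj)
  have hAcard : ∀ j, j ≤ n → ((Finset.Icc 1 j).image w).card = j := by
    intro j hj
    rw [Finset.card_image_of_injOn (hwinj.mono (hsub j hj)), Nat.card_Icc]
    omega
  have hAnot : ∀ j, j + 1 ≤ n → w (j+1) ∉ (Finset.Icc 1 j).image w := by
    intro j hj hmem
    obtain ⟨k, hk, hke⟩ := Finset.mem_image.1 hmem
    simp only [Finset.mem_Icc] at hk
    have : k = j + 1 := hwinj (by simp [Set.mem_Icc]; omega) (by simp [Set.mem_Icc]; omega) hke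
    omega
  have hAins : ∀ j, (Finset.Icc 1 (j+1)).image w = insert (w (j+1)) ((Finset.Icc 1 j).image w) := by
    intro j
    rw [Icc_one_succ, Finset.image_insert]
  have hBins : ∀ j, (Finset.Icc 1 (j+1)).image σ = insert (σ (j+1)) ((Finset.Icc 1 j).image σ) := by
    intro j
    rw [Icc_one_succ, Finset.image_insert]
  -- Phase 1 facts
  have hph1 : ∀ j, 1 ≤ j → j ≤ p →
      σ j ∈ Y ∧ σ j ∉ (Finset.Icc 1 (j-1)).image σ ∧ σ j ≤ w j := by
    intro j h1 h2
    have hmem := Finset.mem_of_max (hσ1 j h1 h2)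
    simp only [Finset.mem_filter, Finset.mem_sdiff] at hmem
    exact ⟨hmem.1.1, hmem.1.2, hmem.2⟩
  have hBY : ∀ j, j ≤ p →
      (Finset.Icc 1 j).image σ ⊆ Y ∧ ((Finset.Icc 1 j).image σ).card = j := by
    intro j
    induction j with
    | zero => intro _; simp
    | succ k ih =>
      intro hk
      have hk' := ih (by omega)
      have hph := hph1 (k+1) (by omega) hk
      rw [Nat.add_sub_cancel] at hph
      rw [hBins k]
      refine ⟨Finset.insert_subset hph.1 hk'.1, ?_⟩
      rw [Finset.card_insert_of_notMem hph.2.1, hk'.2]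
  have hBp : (Finset.Icc 1 p).image σ = Y :=
    Finset.eq_of_subset_of_card_le (hBY p le_rfl).1 (by rw [(hBY p le_rfl).2, hYc])
  -- dominance at p in nth form
  have hdomnth : ∀ k, 1 ≤ k → k ≤ p → nth Y k ≤ nth ((Finset.Icc 1 p).image w) k := by
    intro k h1 h2
    obtain ⟨hlen, hget⟩ := List.forall₂_iff_get.1 hdom
    have hYl : (Finset.sort Y (· ≤ ·)).length = p := by rw [Finset.length_sort, hYc]
    have hk : k - 1 < (Finset.sort Y (· ≤ ·)).length := by omega
    have hk' : k - 1 < (Finset.sort ((Finset.Icc 1 p).image w) (· ≤ ·)).length := by omega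
    rw [nth, nth, List.getD_eq_getElem _ _ hk, List.getD_eq_getElem _ _ hk']
    exact hget (k-1) hk hk'
  -- Invariant for j ≥ p
  have hInv : ∀ j, p ≤ j → j ≤ n → ((Finset.Icc 1 j).image σ).card = j ∧
      ∀ k, 1 ≤ k → k ≤ j →
        nth ((Finset.Icc 1 j).image σ) k ≤ nth ((Finset.Icc 1 j).image w) k := by
    intro j hj
    induction j, hj using Nat.le_induction with
    | base =>
      intro _
      rw [hBp]
      exact ⟨hYc, hdomnth⟩
    | succ j hpj ih =>
      intro hjn
      obtain ⟨hc, hinv⟩ := ih (by omega)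
      obtain ⟨q, hq1, hq2, hqv, hqmin, hqα⟩ := hσ2 (j+1) (by omega) hjn
      rw [Nat.add_sub_cancel] at hqv hqmin
      rw [hAins j] at hqv hqmin hqα
      have hstep := step_lemma j ((Finset.Icc 1 j).image σ) ((Finset.Icc 1 j).image w)
        (w (j+1)) (σ (j+1)) q hc (hAcard j (by omega)) (hAnot j hjn) hinv hq1 hq2
        (fun h => hqv h) hqmin hqα
      constructor
      · rw [hBins j, Finset.card_insert_of_notMem hstep.1, hc]
      · intro k hk1 hk2
        rw [hBins j, hAins j]
        exact hstep.2.1 k hk1 hk2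
  -- main case split
  rcases lt_or_gt_of_ne hip with hlt | hgt'
  · -- i < p : phase 1
    have hm1 := hσ1 i hi1 (by omega)
    have hmem2 := Finset.mem_of_max (hσ1 (i+1) (by omega) (by omega))
    rw [Nat.add_sub_cancel] at hmem2
    simp only [Finset.mem_filter, Finset.mem_sdiff, Nat.cast_id] at hmem2
    have hne : σ (i+1) ≠ σ i := by
      intro h
      exact hmem2.1.2 (h ▸ Finset.mem_image_of_mem σ (by simp [Finset.mem_Icc]; omega))
    have hmemfil : σ (i+1) ∈ (Y \ ((Finset.Icc 1 (i-1)).image σ)).filter (fun y => y ≤ w i) := by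
      simp only [Finset.mem_filter, Finset.mem_sdiff]
      refine ⟨⟨hmem2.1.1, fun hc => hmem2.1.2 ?_⟩, by omega⟩
      exact Finset.image_subset_image (Finset.Icc_subset_Icc_right (by omega)) hc
    have hle := Finset.le_max hmemfil
    rw [hm1] at hle
    have : σ (i+1) ≤ σ i := by
      have h2 : ((σ (i+1) : ℕ) : WithBot ℕ) ≤ ((σ i : ℕ) : WithBot ℕ) := hle
      exact WithBot.coe_le_coe.1 h2
    omega
  · -- i > p : phase 2
    obtain ⟨m, rfl⟩ : ∃ m, i = m + 1 := ⟨i - 1, by omega⟩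
    obtain ⟨hBc, hinv⟩ := hInv m (by omega) (by omega)
    obtain ⟨q, hq1, hq2, hqv, hqmin, hqα⟩ := hσ2 (m+1) (by omega) (by omega)
    rw [Nat.add_sub_cancel] at hqv hqmin
    rw [hAins m] at hqv hqmin hqα
    obtain ⟨q', hq'1, hq'2, _, hq'min, hq'α⟩ := hσ2 (m+1+1) (by omega) hin
    rw [Nat.add_sub_cancel] at hq'min
    have hstep := step_lemma m ((Finset.Icc 1 m).image σ) ((Finset.Icc 1 m).image w)
      (w (m+1)) (σ (m+1)) q hBc (hAcard m (by omega)) (hAnot m (by omega)) hinv hq1 hq2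
      (fun h => hqv h) hqmin hqα
    obtain ⟨hαnot, hnewinv, hBl, hBq, hBr, s, hs1, hsq, hsγ⟩ := hstep
    rw [← hAins m] at hsγ hqα
    -- σ(m+1) position in B(m+1)
    have hBq' : nth ((Finset.Icc 1 (m+1)).image σ) q = σ (m+1) := by
      rw [hBins m]; exact hBq
    -- insert w(m+2) into A(m+1)
    obtain ⟨t', ht'1, ht'2, ht'γ, ht'l, ht'r, ht'lo, ht'hi⟩ :=
      nth_insert ((Finset.Icc 1 (m+1)).image w) (hAnot (m+1) hin)
    rw [← hAins (m+1)] at ht'γ ht'l ht'r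
    rw [hAcard (m+1) (by omega)] at ht'2 ht'hi
    have hcardA1 : ((Finset.Icc 1 (m+1)).image w).card = m + 1 := hAcard (m+1) (by omega)
    have hts : t' ≤ s := by
      by_contra h
      push_neg at h
      have := ht'lo s hs1 h
      rw [hsγ] at this
      omega
    have htq : t' ≤ q := le_trans hts hsq
    -- violation at q for step m+2
    have hviol : nth ((Finset.Icc 1 (m+1+1)).image w) q < nth ((Finset.Icc 1 (m+1)).image σ) q := by
      rw [hBq', hqα]
      rcases lt_or_eq_of_le htq with h | h
      · rw [ht'r q h]
        exact nth_lt_nth _ (by omega) (by omega) (by rw [hcardA1]; omega)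
      · have hsq' : s = q := by omega
        rw [← h, ht'γ, h, ← hsq', hsγ]
        omega
    have hq'q : q' ≤ q := by
      by_contra h
      push_neg at h
      have := hq'min q hq1 h
      omega
    -- conclusion
    rw [hq'α, hqα]
    rcases lt_trichotomy q' t' with h | h | h
    · rw [ht'l q' hq'1 h]
      exact nth_lt_nth _ hq'1 (by omega) (by rw [hcardA1]; omega)
    · rw [← h] at ht'γ
      rw [ht'γ]
      have : w (m+1) = nth ((Finset.Icc 1 (m+1)).image w) s := hsγ.symm
      have hle := nth_le_nth ((Finset.Icc 1 (m+1)).image w) hs1 hsq (by rw [hcardA1]; omega)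
      omega
    · rw [ht'r q' h]
      exact nth_lt_nth _ (by omega) (by omega) (by rw [hcardA1]; omega)
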